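/- If G is a wheel-free graph that contains a diamond as an induced subgraph, then G has a clique cutset. -/

import Mathlib

open SimpleGraph

universe u

variable {V : Type u}

/-- A hole: a chordless cycle of length at least 4. -/
def IsHole (G : SimpleGraph V) {v : V} (c : G.Walk v v) : Prop :=
  c.IsCycle ∧ 4 ≤ c.length ∧
    ∀ x ∈ c.support, ∀ y ∈ c.support, G.Adj x y → s(x, y) ∈ c.edges

/-- There is a hole of `G` passing through both `u` and `v`. -/
def HasHoleThrough (G : SimpleGraph V) (u v : V) : Prop :=
  ∃ (w : V) (c : G.Walk w w), IsHole G c ∧ u ∈ c.support ∧ v ∈ c.support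

/-- `G` contains a theta as an induced subgraph: three internally vertex-disjoint
paths of length at least 2 between two distinct vertices, with no further edges
among the vertices of the three paths. -/
def ContainsTheta (G : SimpleGraph V) : Prop :=
  ∃ (a b : V) (P₁ P₂ P₃ : G.Walk a b),
    a ≠ b ∧ P₁.IsPath ∧ P₂.IsPath ∧ P₃.IsPath ∧
    2 ≤ P₁.length ∧ 2 ≤ P₂.length ∧ 2 ≤ P₃.length ∧
    (∀ x ∈ P₁.support, x ∈ P₂.support → x = a ∨ x = b) ∧
    (∀ x ∈ P₁.support, x ∈ P₃.support → x = a ∨ x = b) ∧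
    (∀ x ∈ P₂.support, x ∈ P₃.support → x = a ∨ x = b) ∧
    (∀ x y : V, (x ∈ P₁.support ∨ x ∈ P₂.support ∨ x ∈ P₃.support) →
      (y ∈ P₁.support ∨ y ∈ P₂.support ∨ y ∈ P₃.support) → G.Adj x y →
      s(x, y) ∈ P₁.edges ∨ s(x, y) ∈ P₂.edges ∨ s(x, y) ∈ P₃.edges)

/-- `G` contains a wheel as an induced subgraph: a hole together with a vertex
having at least 3 neighbors on the hole. -/
def ContainsWheel (G : SimpleGraph V) : Prop :=
  ∃ (w : V) (c : G.Walk w w) (x y₁ y₂ y₃ : V),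
    IsHole G c ∧ x ∉ c.support ∧
    y₁ ∈ c.support ∧ y₂ ∈ c.support ∧ y₃ ∈ c.support ∧
    y₁ ≠ y₂ ∧ y₁ ≠ y₃ ∧ y₂ ≠ y₃ ∧ G.Adj x y₁ ∧ G.Adj x y₂ ∧ G.Adj x y₃

/-- `G` contains a diamond (K₄ minus an edge) as an induced subgraph. -/
def ContainsDiamond (G : SimpleGraph V) : Prop :=
  ∃ a b c d : V, a ≠ b ∧ a ≠ c ∧ a ≠ d ∧ b ≠ c ∧ b ≠ d ∧ c ≠ d ∧
    ¬ G.Adj a b ∧ G.Adj a c ∧ G.Adj a d ∧ G.Adj b c ∧ G.Adj b d ∧ G.Adj c d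

/-- `G` contains a claw (K_{1,3}) as an induced subgraph. -/
def ContainsClaw (G : SimpleGraph V) : Prop :=
  ∃ u v₁ v₂ v₃ : V, v₁ ≠ v₂ ∧ v₁ ≠ v₃ ∧ v₂ ≠ v₃ ∧
    G.Adj u v₁ ∧ G.Adj u v₂ ∧ G.Adj u v₃ ∧
    ¬ G.Adj v₁ v₂ ∧ ¬ G.Adj v₁ v₃ ∧ ¬ G.Adj v₂ v₃

/-- `(A, K, B)` is a split witnessing that `K` is a cutset of `G`:
`A` and `B` are nonempty, the three sets partition the vertex set,
and there are no edges between `A` and `B`. -/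
def IsCutsetSplit (G : SimpleGraph V) (A K B : Set V) : Prop :=
  A.Nonempty ∧ B.Nonempty ∧ Disjoint A K ∧ Disjoint A B ∧ Disjoint K B ∧
    A ∪ K ∪ B = Set.univ ∧ ∀ a ∈ A, ∀ b ∈ B, ¬ G.Adj a b

/-- `G` has a clique cutset. -/
def HasCliqueCutset (G : SimpleGraph V) : Prop :=
  ∃ K A B : Set V, G.IsClique K ∧ IsCutsetSplit G A K B

/-- Some clique cutset of `G` separates `u` and `v`. -/
def CliqueCutsetSeparates (G : SimpleGraph V) (u v : V) : Prop :=
  ∃ K A B : Set V, G.IsClique K ∧ IsCutsetSplit G A K B ∧ u ∈ A ∧ v ∈ B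

/-- `G` has a star cutset: a nonempty cutset containing a vertex adjacent to
all other vertices of the cutset. -/
def HasStarCutset (G : SimpleGraph V) : Prop :=
  ∃ S A B : Set V, S.Nonempty ∧ IsCutsetSplit G A S B ∧
    ∃ x ∈ S, ∀ y ∈ S, y ≠ x → G.Adj x y

/-- `u` and `v` are joined by a walk all of whose vertices lie in `X`. -/
def ReachableWithin (G : SimpleGraph V) (X : Set V) (u v : V) : Prop :=
  ∃ p : G.Walk u v, ∀ x ∈ p.support, x ∈ X

/-- `C` is a connected component of the subgraph of `G` induced by `X`. -/
def IsCompOf (G : SimpleGraph V) (X C : Set V) : Prop :=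
  C.Nonempty ∧ C ⊆ X ∧ (∀ u ∈ C, ∀ v ∈ C, ReachableWithin G X u v) ∧
    ∀ u ∈ C, ∀ v ∈ X, G.Adj u v → v ∈ C

/-- The subgraph of `G` induced by `A` is a disjoint union of cliques. -/
def UnionOfCliques (G : SimpleGraph V) (A : Set V) : Prop :=
  ∀ x ∈ A, ∀ y ∈ A, ∀ z ∈ A, G.Adj x y → G.Adj y z → x ≠ z → G.Adj x z

/-- `(X₁, X₂, A₁, A₂, B₁, B₂)` is a split of an almost 2-join of `G`. -/
def AlmostTwoJoinSplit (G : SimpleGraph V) (X₁ X₂ A₁ A₂ B₁ B₂ : Set V) : Prop :=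
  Disjoint X₁ X₂ ∧ X₁ ∪ X₂ = Set.univ ∧ 3 ≤ X₁.ncard ∧ 3 ≤ X₂.ncard ∧
  A₁.Nonempty ∧ B₁.Nonempty ∧ A₂.Nonempty ∧ B₂.Nonempty ∧
  A₁ ⊆ X₁ ∧ B₁ ⊆ X₁ ∧ A₂ ⊆ X₂ ∧ B₂ ⊆ X₂ ∧
  Disjoint A₁ B₁ ∧ Disjoint A₂ B₂ ∧
  (∀ a ∈ A₁, ∀ b ∈ A₂, G.Adj a b) ∧
  (∀ a ∈ B₁, ∀ b ∈ B₂, G.Adj a b) ∧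
  (∀ x ∈ X₁, ∀ y ∈ X₂, G.Adj x y → (x ∈ A₁ ∧ y ∈ A₂) ∨ (x ∈ B₁ ∧ y ∈ B₂))

/-- The subgraph of `G` induced by `X` is a chordless path. -/
def InducesPath (G : SimpleGraph V) (X : Set V) : Prop :=
  ∃ (u v : V) (p : G.Walk u v), p.IsPath ∧ (∀ x : V, x ∈ p.support ↔ x ∈ X) ∧
    ∀ x ∈ X, ∀ y ∈ X, G.Adj x y → s(x, y) ∈ p.edges

/-- `(X₁, X₂, A₁, A₂, B₁, B₂)` is a split of a 2-join of `G`. -/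
def TwoJoinSplit (G : SimpleGraph V) (X₁ X₂ A₁ A₂ B₁ B₂ : Set V) : Prop :=
  AlmostTwoJoinSplit G X₁ X₂ A₁ A₂ B₁ B₂ ∧
  (∃ a ∈ A₁, ∃ b ∈ B₁, ReachableWithin G X₁ a b) ∧
  (∃ a ∈ A₂, ∃ b ∈ B₂, ReachableWithin G X₂ a b) ∧
  (A₁.ncard = 1 → B₁.ncard = 1 → ¬ InducesPath G X₁) ∧
  (A₂.ncard = 1 → B₂.ncard = 1 → ¬ InducesPath G X₂)

/-- `(X₁, X₂, A₁, A₂, B₁, B₂)` is a split of a minimally-sided 2-join of `G`,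
with `X₁` a minimal side. -/
def MinimallySidedTwoJoin (G : SimpleGraph V) (X₁ X₂ A₁ A₂ B₁ B₂ : Set V) : Prop :=
  TwoJoinSplit G X₁ X₂ A₁ A₂ B₁ B₂ ∧
  ∀ Y₁ Y₂ C₁ C₂ D₁ D₂ : Set V, TwoJoinSplit G Y₁ Y₂ C₁ C₂ D₁ D₂ →
    ¬ Y₁ ⊂ X₁ ∧ ¬ Y₂ ⊂ X₁

/-- Conditions (i)–(iii) and (vi)–(viii) of consistency of an almost 2-join,
for the side `X` with special sets `A` and `B`. -/
def ConsistentSide (G : SimpleGraph V) (X A B : Set V) : Prop :=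
  (∀ C : Set V, IsCompOf G X C → (C ∩ A).Nonempty ∧ (C ∩ B).Nonempty) ∧
  (∀ a ∈ A, ∃ b ∈ B, ¬ G.Adj a b) ∧
  (∀ b ∈ B, ∃ a ∈ A, ¬ G.Adj b a) ∧
  (∀ u ∈ X, ∀ v ∈ X, ReachableWithin G X u v) ∧
  (∀ v ∈ X, ∃ b ∈ B, ∃ p : G.Walk v b, p.IsPath ∧ (∀ x ∈ p.support, x ∈ X) ∧
    ∀ x ∈ p.support, x ∈ A → x = v ∨ x = b) ∧
  (∀ v ∈ X, ∃ a ∈ A, ∃ p : G.Walk v a, p.IsPath ∧ (∀ x ∈ p.support, x ∈ X) ∧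
    ∀ x ∈ p.support, x ∈ B → x = v ∨ x = a)

/-- The block of decomposition of `G` with respect to a 2-join, keeping the side `X`
(with special sets `A`, `B`) and replacing the other side by a marker path of
length `k` whose endpoint `0` is complete to `A` and endpoint `k` is complete to `B`. -/
def TwoJoinBlock (G : SimpleGraph V) (X A B : Set V) (k : ℕ) :
    SimpleGraph (↥X ⊕ Fin (k + 1)) where
  Adj x y :=
    match x, y with
    | Sum.inl a, Sum.inl b => G.Adj ↑a ↑b
    | Sum.inl a, Sum.inr i => ((a : V) ∈ A ∧ i = 0) ∨ ((a : V) ∈ B ∧ i = Fin.last k)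
    | Sum.inr i, Sum.inl a => ((a : V) ∈ A ∧ i = 0) ∨ ((a : V) ∈ B ∧ i = Fin.last k)
    | Sum.inr i, Sum.inr j => (i : ℕ) + 1 = (j : ℕ) ∨ (j : ℕ) + 1 = (i : ℕ)
  symm := ⟨by
    rintro (a | i) (b | j) h
    · exact h.symm
    · exact h
    · exact h
    · exact Or.symm h⟩
  loopless := ⟨by
    rintro (a | i) h
    · exact G.irrefl h
    · rcases h with h | h <;> omega⟩

/-- A graph is chordless if no cycle in it has a chord. -/
def ChordlessGraph (G : SimpleGraph V) : Prop :=
  ∀ (u : V) (c : G.Walk u u), c.IsCycle →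
    ∀ x ∈ c.support, ∀ y ∈ c.support, G.Adj x y → s(x, y) ∈ c.edges

/-- The subgraph of `G` induced by `S` has a clique cutset. -/
def HasCliqueCutsetOn (G : SimpleGraph V) (S : Set V) : Prop :=
  ∃ K A B : Set V, G.IsClique K ∧ A.Nonempty ∧ B.Nonempty ∧ Disjoint A K ∧
    Disjoint A B ∧ Disjoint K B ∧ A ∪ K ∪ B = S ∧ ∀ a ∈ A, ∀ b ∈ B, ¬ G.Adj a b

/-- The total weight of a set of vertices. -/
noncomputable def wsum [Fintype V] (w : V → ℕ) (A : Set V) : ℕ :=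
  ∑ v ∈ A.toFinite.toFinset, w v

lemma wheel4 (G : SimpleGraph V) (v1 v2 v3 v4 x : V)
    (h12 : G.Adj v1 v2) (h23 : G.Adj v2 v3) (h34 : G.Adj v3 v4) (h41 : G.Adj v4 v1)
    (h13 : ¬ G.Adj v1 v3) (h24 : ¬ G.Adj v2 v4) (hne13 : v1 ≠ v3) (hne24 : v2 ≠ v4)
    (hx1 : G.Adj x v1) (hx2 : G.Adj x v2) (hx3 : G.Adj x v3)
    (hx4 : x ≠ v4) : ContainsWheel G := by
  have n12 := h12.ne
  have n23 := h23.ne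
  have n34 := h34.ne
  have n41 := h41.ne
  refine ⟨v1, Walk.cons h12 (Walk.cons h23 (Walk.cons h34 (Walk.cons h41 Walk.nil))),
    x, v1, v2, v3, ⟨?_, by simp, ?_⟩, ?_, by simp, by simp, by simp,
    n12, hne13, n23, hx1, hx2, hx3⟩
  · rw [Walk.isCycle_def]
    refine ⟨⟨?_⟩, by simp, ?_⟩
    · simp only [Walk.edges_cons, Walk.edges_nil, List.nodup_cons, List.mem_cons,
        List.not_mem_nil, or_false, List.mem_singleton, List.nodup_nil, and_true]
      refine ⟨?_, ?_, ?_⟩ <;> simp [Sym2.eq, Sym2.rel_iff'] <;> tauto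
    · simp only [Walk.support_cons, Walk.support_nil, List.tail_cons]
      simp [List.nodup_cons]
      tauto
  · intro u hu w hw huw
    simp only [Walk.support_cons, Walk.support_nil, List.mem_cons, List.not_mem_nil, or_false] at hu hw
    simp only [Walk.edges_cons, Walk.edges_nil, List.mem_cons, List.not_mem_nil, or_false]
    have hsymm : ∀ p q : V, s(p,q) = s(q,p) := fun p q => Sym2.eq_swap
    rcases hu with rfl|rfl|rfl|rfl|rfl <;> rcases hw with rfl|rfl|rfl|rfl|rfl <;>
      first
        | exact absurd huw (G.irrefl)
        | tauto
        | (exact absurd huw h13) | (exact absurd huw h24)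
        | (exact absurd huw.symm h13) | (exact absurd huw.symm h24)
        | (rw [hsymm]; tauto)
  · simp only [Walk.support_cons, Walk.support_nil, List.mem_cons, List.not_mem_nil, or_false]
    push_neg
    exact ⟨hx1.ne, hx2.ne, hx3.ne, hx4, hx1.ne⟩

lemma clique_common (G : SimpleGraph V) (hW : ¬ ContainsWheel G) {a b c d : V}
    (hab : ¬ G.Adj a b) (hne : a ≠ b)
    (hca : G.Adj a c) (hcb : G.Adj b c) (hda : G.Adj a d) (hdb : G.Adj b d)
    (hcd : G.Adj c d) :
    ∀ x y, G.Adj a x → G.Adj b x → G.Adj a y → G.Adj b y → x ≠ y → G.Adj x y := by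
  intro x y hax hbx hay hby hxy
  by_contra hnxy
  have hnyx : ¬ G.Adj y x := fun h => hnxy h.symm
  -- hole (a,x,b,y) with hub z having a third neighbor among {x} : wheel4 G a x b y z
  -- hole (a,y,b,x) with hub z having third neighbor y : wheel4 G a y b x z
  apply hW
  by_cases hcx : c = x
  · -- hub d on (a,x,b,y); d ≠ x, d ≠ y
    subst hcx
    exact wheel4 G a c b y d hca hcb.symm hby hay.symm hab hnxy hne hxy
      hda.symm hcd.symm hdb.symm (fun h => hnxy (h ▸ hcd))
  by_cases hcy : c = y
  · subst hcy
    exact wheel4 G a c b x d hca hcb.symm hbx hax.symm hab hnyx hne (Ne.symm hxy)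
      hda.symm hcd.symm hdb.symm (fun h => hnxy (h ▸ hcd.symm))
  by_cases hdx : d = x
  · subst hdx
    exact wheel4 G a d b y c hda hdb.symm hby hay.symm hab hnxy hne hxy
      hca.symm hcd hcb.symm hcy
  by_cases hdy : d = y
  · subst hdy
    exact wheel4 G a d b x c hda hdb.symm hbx hax.symm hab hnyx hne (Ne.symm hxy)
      hca.symm hcd hcb.symm hcx
  by_cases h1 : G.Adj c x
  · exact wheel4 G a x b y c hax hbx.symm hby hay.symm hab hnxy hne hxy
      hca.symm h1 hcb.symm hcy
  by_cases h2 : G.Adj c y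
  · exact wheel4 G a y b x c hay hby.symm hbx hax.symm hab hnyx hne (Ne.symm hxy)
      hca.symm h2 hcb.symm hcx
  by_cases h3 : G.Adj d x
  · exact wheel4 G a x b y d hax hbx.symm hby hay.symm hab hnxy hne hxy
      hda.symm h3 hdb.symm hdy
  by_cases h4 : G.Adj d y
  · exact wheel4 G a y b x d hay hby.symm hbx hax.symm hab hnyx hne (Ne.symm hxy)
      hda.symm h4 hdb.symm hdx
  -- hole (a, c, b, y), hub d
  exact wheel4 G a c b y d hca hcb.symm hby hay.symm hab h2 hne
    (fun h => hcy h) hda.symm hcd.symm hdb.symm hdy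

lemma seg (G : SimpleGraph V) (z : V) :
    ∀ {a b : V} (Q : G.Walk a b), G.Adj z b →
    ∃ (e : V) (R : G.Walk a e) (S : G.Walk e b),
      Q = R.append S ∧ G.Adj z e ∧ ∀ x ∈ R.support, G.Adj z x → x = e := by
  intro a b Q
  induction Q with
  | nil =>
    intro hzb
    exact ⟨_, Walk.nil, Walk.nil, rfl, hzb, by simp⟩
  | @cons u v w h q ih =>
    intro hzb
    by_cases hzu : G.Adj z u
    · exact ⟨u, Walk.nil, Walk.cons h q, rfl, hzu, by simp⟩
    · obtain ⟨e, R', S, heq, hze, hsole⟩ := ih hzb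
      refine ⟨e, Walk.cons h R', S, by rw [heq]; rfl, hze, ?_⟩
      intro x hx hzx
      rw [Walk.support_cons, List.mem_cons] at hx
      rcases hx with rfl | hx
      · exact absurd hzx hzu
      · exact hsole x hx hzx

lemma seg2 (G : SimpleGraph V) (z w : V) :
    ∀ {a b : V} (Q : G.Walk a b), G.Adj z b → G.Adj w b →
    ∃ (z1 z2 e1 e2 : V) (R : G.Walk a e2) (S : G.Walk e2 b),
      ((z1 = z ∧ z2 = w) ∨ (z1 = w ∧ z2 = z)) ∧
      Q = R.append S ∧ e1 ∈ R.support ∧ G.Adj z1 e1 ∧ G.Adj z2 e2 ∧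
      (∀ x ∈ R.support, G.Adj z2 x → x = e2) := by
  intro a b Q
  induction Q with
  | nil =>
    intro hzb hwb
    exact ⟨z, w, _, _, Walk.nil, Walk.nil, Or.inl ⟨rfl, rfl⟩, rfl, by simp, hzb, hwb, by simp⟩
  | @cons u v w' h q ih =>
    intro hzb hwb
    by_cases hzu : G.Adj z u
    · by_cases hwu : G.Adj w u
      · exact ⟨z, w, u, u, Walk.nil, Walk.cons h q, Or.inl ⟨rfl, rfl⟩, rfl, by simp, hzu, hwu,
          by simp⟩
      · obtain ⟨e, R', S, heq, hwe, hsole⟩ := seg G w q hwb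
        refine ⟨z, w, u, e, Walk.cons h R', S, Or.inl ⟨rfl, rfl⟩, by rw [heq]; rfl,
          by simp, hzu, hwe, ?_⟩
        intro x hx hwx
        rw [Walk.support_cons, List.mem_cons] at hx
        rcases hx with rfl | hx
        · exact absurd hwx hwu
        · exact hsole x hx hwx
    · by_cases hwu : G.Adj w u
      · obtain ⟨e, R', S, heq, hze, hsole⟩ := seg G z q hzb
        refine ⟨w, z, u, e, Walk.cons h R', S, Or.inr ⟨rfl, rfl⟩, by rw [heq]; rfl,
          by simp, hwu, hze, ?_⟩
        intro x hx hzx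
        rw [Walk.support_cons, List.mem_cons] at hx
        rcases hx with rfl | hx
        · exact absurd hzx hzu
        · exact hsole x hx hzx
      · obtain ⟨z1, z2, e1, e2, R', S, hz12, heq, he1, hz1e1, hz2e2, hsole⟩ := ih hzb hwb
        refine ⟨z1, z2, e1, e2, Walk.cons h R', S, hz12, by rw [heq]; rfl, ?_, hz1e1, hz2e2, ?_⟩
        · rw [Walk.support_cons, List.mem_cons]; exact Or.inr he1
        · intro x hx hz2x
          rw [Walk.support_cons, List.mem_cons] at hx
          rcases hx with rfl | hx
          · rcases hz12 with ⟨h1, h2⟩ | ⟨h1, h2⟩ <;> subst h2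
            · exact absurd hz2x hwu
            · exact absurd hz2x hzu
          · exact hsole x hx hz2x

lemma no_jump (G : SimpleGraph V) {a a' b e2 z1 z2 e1 : V}
    (h : G.Adj a a') (R : G.Walk a' e2) (S : G.Walk e2 b)
    (hp : ((Walk.cons h R).append S).IsPath)
    (hind : ∀ x ∈ ((Walk.cons h R).append S).support,
      ∀ y ∈ ((Walk.cons h R).append S).support,
      G.Adj x y → s(x, y) ∈ ((Walk.cons h R).append S).edges)
    (hRlen : 0 < R.length)
    (hz1z2 : G.Adj z1 z2) (hz1a : G.Adj z1 a) (hz2a : G.Adj z2 a)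
    (hz2e2 : G.Adj z2 e2)
    (he1 : e1 ∈ R.support) (hz1e1 : G.Adj z1 e1)
    (hsole : ∀ x ∈ R.support, G.Adj z2 x → x = e2)
    (hz1p : z1 ∉ ((Walk.cons h R).append S).support)
    (hz2p : z2 ∉ ((Walk.cons h R).append S).support) : ContainsWheel G := by
  set T : G.Walk a e2 := Walk.cons h R with hT
  set p : G.Walk a b := T.append S with hpdef
  -- basic facts
  have hTsub : T.support ⊆ p.support := by
    rw [hpdef, Walk.support_append]
    exact fun x hx => List.mem_append_left _ hx
  have hTpath : T.IsPath := Walk.IsPath.of_append_left hp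
  have hTsupp : T.support = a :: R.support := by rw [hT, Walk.support_cons]
  have haq : a ∉ R.support := by
    have := hTpath
    rw [hT, Walk.cons_isPath_iff] at this
    exact this.2
  have he2R : e2 ∈ R.support := Walk.end_mem_support R
  have hae2 : a ≠ e2 := fun hh => haq (hh ▸ he2R)
  have hz2T : z2 ∉ T.support := fun hh => hz2p (hTsub hh)
  have hz1T : z1 ∉ T.support := fun hh => hz1p (hTsub hh)
  -- the hole
  set C : G.Walk z2 z2 :=
    Walk.cons hz2a (T.append (Walk.cons hz2e2.symm Walk.nil)) with hC
  have hCsupp : C.support = z2 :: (T.support ++ [z2]) := by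
    rw [hC, Walk.support_cons, Walk.support_append]
    simp
  have hCmem : ∀ x, x ∈ C.support ↔ x = z2 ∨ x ∈ T.support := by
    intro x
    rw [hCsupp]
    simp only [List.mem_cons, List.mem_append, List.mem_singleton]
    tauto
  have hCedges : C.edges = s(z2, a) :: (T.edges ++ [s(e2, z2)]) := by
    rw [hC, Walk.edges_cons, Walk.edges_append]
    simp
  have hCycle : C.IsCycle := by
    rw [Walk.isCycle_def]
    refine ⟨⟨?_⟩, by simp [hC], ?_⟩
    · rw [hCedges]
      refine List.nodup_cons.2 ⟨?_, ?_⟩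
      · intro hmem
        rcases List.mem_append.1 hmem with hmem | hmem
        · exact hz2T (Walk.fst_mem_support_of_mem_edges T hmem)
        · rw [List.mem_singleton, Sym2.eq_iff] at hmem
          rcases hmem with ⟨h1, h2⟩ | ⟨h1, h2⟩
          · exact hz2a.ne h2.symm
          · exact hae2 h2
      · refine List.Nodup.append hTpath.isTrail.edges_nodup (List.nodup_singleton _) ?_
        intro e he hmem
        rw [List.mem_singleton] at hmem
        subst hmem
        exact hz2T (Walk.snd_mem_support_of_mem_edges T he)
    · rw [hCsupp]
      simp only [List.tail_cons]
      refine List.Nodup.append hTpath.support_nodup (List.nodup_singleton _) ?_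
      intro x hx hmem
      rw [List.mem_singleton] at hmem
      exact hz2T (hmem ▸ hx)
  have hClen : 4 ≤ C.length := by
    rw [hC]
    simp only [Walk.length_cons, Walk.length_append, Walk.length_nil, hT]
    omega
  have hChordless : ∀ x ∈ C.support, ∀ y ∈ C.support, G.Adj x y → s(x, y) ∈ C.edges := by
    have key : ∀ y ∈ T.support, G.Adj z2 y → s(z2, y) ∈ C.edges := by
      intro y hy hzy
      rw [hTsupp, List.mem_cons] at hy
      rcases hy with rfl | hy
      · rw [hCedges]; exact List.mem_cons_self
      · have := hsole y hy hzy
        subst this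
        rw [hCedges]
        refine List.mem_cons_of_mem _ (List.mem_append_right _ ?_)
        rw [List.mem_singleton, Sym2.eq_swap]
    intro x hx y hy hxy
    rw [hCmem] at hx hy
    rcases hx with rfl | hx
    · rcases hy with rfl | hy
      · exact absurd hxy (G.irrefl)
      · exact key y hy hxy
    · rcases hy with rfl | hy
      · rw [Sym2.eq_swap]
        exact key x hx hxy.symm
      · -- both on T
        have hmem := hind x (hTsub hx) y (hTsub hy) hxy
        rw [hpdef, Walk.edges_append, List.mem_append] at hmem
        rcases hmem with hmem | hmem
        · rw [hCedges]
          exact List.mem_cons_of_mem _ (List.mem_append_left _ hmem)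
        · exfalso
          have hxS : x ∈ S.support := Walk.fst_mem_support_of_mem_edges S hmem
          have hyS : y ∈ S.support := Walk.snd_mem_support_of_mem_edges S hmem
          have hnd : p.support.Nodup := hp.support_nodup
          rw [hpdef, Walk.support_append] at hnd
          have hdisj := (List.nodup_append.1 hnd).2.2
          have hxe2 : x = e2 := by
            rcases (by rw [Walk.support_eq_cons S] at hxS; exact List.mem_cons.1 hxS) with
              h1 | h1
            · exact h1
            · exact absurd h1 (by intro hh; exact hdisj x hx x hh rfl)
          have hye2 : y = e2 := by
            rcases (by rw [Walk.support_eq_cons S] at hyS; exact List.mem_cons.1 hyS) with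
              h1 | h1
            · exact h1
            · exact absurd h1 (by intro hh; exact hdisj y hy y hh rfl)
          exact hxy.ne (hxe2.trans hye2.symm)
  -- assemble the wheel with hub z1
  refine ⟨z2, C, z1, z2, a, e1, ⟨hCycle, hClen, hChordless⟩, ?_, ?_, ?_, ?_, ?_, ?_, ?_,
    hz1z2, hz1a, hz1e1⟩
  · rw [hCmem]
    push_neg
    exact ⟨hz1z2.ne, hz1T⟩
  · rw [hCmem]; exact Or.inl rfl
  · rw [hCmem]; exact Or.inr (hTsupp ▸ List.mem_cons_self)
  · rw [hCmem]
    exact Or.inr (hTsupp ▸ List.mem_cons_of_mem _ he1)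
  · exact fun hh => hz2T (by rw [hh, hTsupp]; exact List.mem_cons_self)
  · exact fun hh => hz2T (by rw [hh, hTsupp]; exact List.mem_cons_of_mem _ he1)
  · exact fun hh => haq (hh ▸ he1)

lemma adj_second (G : SimpleGraph V) (hW : ¬ ContainsWheel G) {a a' b z w : V}
    (h : G.Adj a a') (q : G.Walk a' b)
    (hp : (Walk.cons h q).IsPath)
    (hind : ∀ x ∈ (Walk.cons h q).support, ∀ y ∈ (Walk.cons h q).support,
       G.Adj x y → s(x, y) ∈ (Walk.cons h q).edges)
    (hzw : G.Adj z w)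
    (hza : G.Adj z a) (hzb : G.Adj z b) (hwa : G.Adj w a) (hwb : G.Adj w b)
    (hzs : z ∉ (Walk.cons h q).support) (hws : w ∉ (Walk.cons h q).support) :
    G.Adj z a' ∧ G.Adj w a' := by
  obtain ⟨z1, z2, e1, e2, R, S, hz12, heq, he1, hz1e1, hz2e2, hsole⟩ := seg2 G z w q hzb hwb
  subst heq
  cases R with
  | nil =>
    have he1' : e1 = a' := by simpa using he1
    subst he1'
    rcases hz12 with ⟨rfl, rfl⟩ | ⟨rfl, rfl⟩
    · exact ⟨hz1e1, hz2e2⟩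
    · exact ⟨hz2e2, hz1e1⟩
  | cons h' R' =>
    exfalso
    apply hW
    rcases hz12 with ⟨rfl, rfl⟩ | ⟨rfl, rfl⟩
    · exact no_jump G h (Walk.cons h' R') S hp hind (by simp) hzw hza hwa hz2e2
        he1 hz1e1 hsole hzs hws
    · exact no_jump G h (Walk.cons h' R') S hp hind (by simp) hzw.symm hwa hza hz2e2
        he1 hz1e1 hsole hws hzs

lemma edge_of_length_one {G : SimpleGraph V} {u v : V} (w : G.Walk u v)
    (hw : w.length = 1) : s(u, v) ∈ w.edges := by
  cases w with
  | nil => simp at hw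
  | cons h w' =>
    cases w' with
    | nil => simp
    | cons h' w'' => simp [Walk.length_cons] at hw

lemma shortcut (G : SimpleGraph V) {a b : V} (X : Set V) (p : G.Walk a b)
    (hX : ∀ v ∈ p.support, v ∈ X) {x y : V}
    (hx : x ∈ p.support) (hy : y ∈ p.support) (hxy : G.Adj x y)
    (hne : s(x, y) ∉ p.edges) :
    ∃ q : G.Walk a b, (∀ v ∈ q.support, v ∈ X) ∧ q.length < p.length := by
  classical
  set p1 := p.takeUntil x hx with hp1
  set p2 := p.dropUntil x hx with hp2
  have hspec : p1.append p2 = p := Walk.take_spec p hx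
  have hlen : p1.length + p2.length = p.length := by
    rw [← hspec, Walk.length_append]
  have hy' : y ∈ p1.support ∨ y ∈ p2.support := by
    rw [← hspec, Walk.mem_support_append_iff] at hy
    exact hy
  rcases hy' with hy1 | hy2
  · -- y before x : q = (p1.takeUntil y) ++ (y,x) ++ p2
    set q : G.Walk a b := (p1.takeUntil y hy1).append (Walk.cons hxy.symm p2) with hq
    have hdrop : (p1.takeUntil y hy1).length + (p1.dropUntil y hy1).length = p1.length := by
      conv_rhs => rw [← Walk.take_spec p1 hy1]
      rw [Walk.length_append]
    have hd0 : (p1.dropUntil y hy1).length ≠ 0 := by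
      intro h0
      exact hxy.ne' (Walk.eq_of_length_eq_zero h0)
    have hd1 : (p1.dropUntil y hy1).length ≠ 1 := by
      intro h1
      have := edge_of_length_one _ h1
      have h2 : s(y, x) ∈ p1.edges := Walk.edges_dropUntil_subset p1 hy1 this
      have h3 : s(y, x) ∈ p.edges := by
        rw [← hspec, Walk.edges_append]
        exact List.mem_append_left _ h2
      rw [Sym2.eq_swap] at h3
      exact hne h3
    refine ⟨q, ?_, ?_⟩
    · intro v hv
      rw [hq, Walk.support_append, List.mem_append] at hv
      rcases hv with hv | hv
      · exact hX v (Walk.support_takeUntil_subset p hx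
          (Walk.support_takeUntil_subset p1 hy1 hv))
      · have : v ∈ (Walk.cons hxy.symm p2).support := List.mem_of_mem_tail hv
        rw [Walk.support_cons, List.mem_cons] at this
        rcases this with rfl | hv'
        · exact hX _ hy
        · exact hX v (Walk.support_dropUntil_subset p hx hv')
    · rw [hq, Walk.length_append, Walk.length_cons]
      omega
  · -- y after x : q = p1 ++ (x,y) ++ (p2.dropUntil y)
    set q : G.Walk a b := p1.append (Walk.cons hxy (p2.dropUntil y hy2)) with hq
    have hdrop : (p2.takeUntil y hy2).length + (p2.dropUntil y hy2).length = p2.length := by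
      conv_rhs => rw [← Walk.take_spec p2 hy2]
      rw [Walk.length_append]
    have hd0 : (p2.takeUntil y hy2).length ≠ 0 := by
      intro h0
      exact hxy.ne (Walk.eq_of_length_eq_zero h0)
    have hd1 : (p2.takeUntil y hy2).length ≠ 1 := by
      intro h1
      have := edge_of_length_one _ h1
      have h2 : s(x, y) ∈ p2.edges := Walk.edges_takeUntil_subset p2 hy2 this
      have h3 : s(x, y) ∈ p.edges := by
        rw [← hspec, Walk.edges_append]
        exact List.mem_append_right _ h2
      exact hne h3
    refine ⟨q, ?_, ?_⟩
    · intro v hv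
      rw [hq, Walk.support_append, List.mem_append] at hv
      rcases hv with hv | hv
      · exact hX v (Walk.support_takeUntil_subset p hx hv)
      · have : v ∈ (Walk.cons hxy (p2.dropUntil y hy2)).support := List.mem_of_mem_tail hv
        rw [Walk.support_cons, List.mem_cons] at this
        rcases this with rfl | hv'
        · exact hX v hx
        · exact hX v (Walk.support_dropUntil_subset p hx
            (Walk.support_dropUntil_subset p2 hy2 hv'))
    · rw [hq, Walk.length_append, Walk.length_cons]
      omega

lemma cut_case (G : SimpleGraph V) {a b : V} (K : Set V)
    (hK : G.IsClique K) (haK : a ∉ K) (hbK : b ∉ K)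
    (hreach : ¬ ∃ p : G.Walk a b, ∀ v ∈ p.support, v ∉ K) :
    HasCliqueCutset G := by
  set A : Set V := {x | ∃ p : G.Walk a x, ∀ v ∈ p.support, v ∉ K} with hA
  set B : Set V := (A ∪ K)ᶜ with hB
  have haA : a ∈ A := ⟨Walk.nil, by simpa using haK⟩
  have hAK : ∀ x ∈ A, x ∉ K := by
    rintro x ⟨p, hp⟩
    exact hp x (Walk.end_mem_support p)
  have hbB : b ∈ B := by
    rw [hB]
    intro hmem
    rcases hmem with hmem | hmem
    · exact hreach (by rwa [hA] at hmem)
    · exact hbK hmem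
  refine ⟨K, A, B, hK, ⟨a, haA⟩, ⟨b, hbB⟩, ?_, ?_, ?_, ?_, ?_⟩
  · exact Set.disjoint_left.2 hAK
  · exact Set.disjoint_left.2 fun x hx hxB => hxB (Or.inl hx)
  · exact Set.disjoint_left.2 fun x hx hxB => hxB (Or.inr hx)
  · ext x
    simp only [hB, Set.mem_union, Set.mem_compl_iff, Set.mem_univ, iff_true]
    tauto
  · rintro x hx y hy hadj
    apply hy
    by_cases hyK : y ∈ K
    · exact Or.inr hyK
    · obtain ⟨p, hp⟩ := hx
      refine Or.inl ⟨p.concat hadj, ?_⟩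
      intro v hv
      rw [Walk.support_concat, List.mem_append] at hv
      rcases hv with hv | hv
      · exact hp v hv
      · rw [List.mem_singleton] at hv
        exact hv ▸ hyK

lemma mid_of_length_two {G : SimpleGraph V} {u v : V} (w : G.Walk u v)
    (h : w.length = 2) : ∃ m, G.Adj u m ∧ G.Adj m v ∧ m ∈ w.support := by
  cases w with
  | nil => simp at h
  | cons h1 w' =>
    cases w' with
    | nil => simp at h
    | cons h2 w'' =>
      cases w'' with
      | nil => exact ⟨_, h1, h2, by simp⟩
      | cons h3 w''' => simp [Walk.length_cons] at h

/-- The common neighborhood of `a` and `b`. -/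
def commonNbhd (G : SimpleGraph V) (a b : V) : Set V := {v | G.Adj a v ∧ G.Adj b v}

/-- Minimal length of an `a`–`b` walk avoiding the common neighborhood. -/
noncomputable def ddist (G : SimpleGraph V) (a b : V) : ℕ :=
  sInf {n | ∃ p : G.Walk a b, p.length = n ∧ ∀ v ∈ p.support, v ∉ commonNbhd G a b}

/-- Measure for the main recursion. -/
noncomputable def measureAB [Fintype V] (G : SimpleGraph V) (a b : V) : ℕ :=
  (Fintype.card V + 1) * (Fintype.card V - (commonNbhd G a b).ncard) + ddist G a b

lemma ddist_le_card [Fintype V] (G : SimpleGraph V) (a b : V) :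
    ddist G a b ≤ Fintype.card V := by
  classical
  rw [ddist]
  rcases Set.eq_empty_or_nonempty
      {n | ∃ p : G.Walk a b, p.length = n ∧ ∀ v ∈ p.support, v ∉ commonNbhd G a b} with
    hE | ⟨m, p, rfl, hp⟩
  · rw [hE]
    simp [Nat.sInf_empty]
  · have h1 : p.bypass.length ∈
        {n | ∃ q : G.Walk a b, q.length = n ∧ ∀ v ∈ q.support, v ∉ commonNbhd G a b} :=
      ⟨p.bypass, rfl, fun v hv => hp v (Walk.support_bypass_subset p hv)⟩
    have h2 := Nat.sInf_le h1
    have h3 := (Walk.bypass_isPath p).length_lt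
    omega

lemma main_rec [Fintype V] (G : SimpleGraph V) (hW : ¬ ContainsWheel G) :
    ∀ (n : ℕ) (a b : V), ¬ G.Adj a b → a ≠ b →
    (∃ c d : V, (G.Adj a c ∧ G.Adj b c) ∧ (G.Adj a d ∧ G.Adj b d) ∧ G.Adj c d) →
    measureAB G a b ≤ n → HasCliqueCutset G := by
  intro n
  induction n using Nat.strong_induction_on with
  | _ n IH =>
  intro a b hab hne hcd hμ
  classical
  obtain ⟨c, d, ⟨hca, hcb⟩, ⟨hda, hdb⟩, hcdadj⟩ := hcd
  set K : Set V := commonNbhd G a b with hK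
  have hKmem : ∀ v, v ∈ K ↔ G.Adj a v ∧ G.Adj b v := fun v => Iff.rfl
  have haK : a ∉ K := fun hh => G.irrefl hh.1
  have hbK : b ∉ K := fun hh => G.irrefl hh.2
  have hclique : G.IsClique K := by
    intro x hx y hy hxy
    exact clique_common G hW hab hne hca hcb hda hdb hcdadj x y hx.1 hx.2 hy.1 hy.2 hxy
  by_cases hr : ∃ p : G.Walk a b, ∀ v ∈ p.support, v ∉ K
  swap
  · exact cut_case G K hclique haK hbK hr
  -- reachable case
  set ℓ := ddist G a b with hℓ
  have hmemℓ : ℓ ∈ {n | ∃ p : G.Walk a b, p.length = n ∧ ∀ v ∈ p.support, v ∉ K} := by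
    apply Nat.sInf_mem
    obtain ⟨p, hp⟩ := hr
    exact ⟨p.length, p, rfl, hp⟩
  obtain ⟨p0, hp0len, hp0avoid⟩ := hmemℓ
  have hmin : ∀ q : G.Walk a b, (∀ v ∈ q.support, v ∉ K) → ℓ ≤ q.length :=
    fun q hq => Nat.sInf_le ⟨q, rfl, hq⟩
  have hex : ∃ p : G.Walk a b, p.IsPath ∧ (∀ v ∈ p.support, v ∉ K) ∧ p.length = ℓ := by
    refine ⟨p0.bypass, Walk.bypass_isPath p0, ?_, ?_⟩
    · exact fun v hv => hp0avoid v (Walk.support_bypass_subset p0 hv)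
    · have h1 := Walk.length_bypass_le p0
      have h2 := hmin p0.bypass fun v hv => hp0avoid v (Walk.support_bypass_subset p0 hv)
      omega
  obtain ⟨p, hpath, havoid, hplen⟩ := hex
  have hind : ∀ x ∈ p.support, ∀ y ∈ p.support, G.Adj x y → s(x, y) ∈ p.edges := by
    intro x hx y hy hxy
    by_contra hmem
    obtain ⟨q, hq, hqlen⟩ := shortcut G {v | v ∉ K} p havoid hx hy hxy hmem
    have := hmin q hq
    omega
  have hl0 : p.length ≠ 0 := fun hh => hne (Walk.eq_of_length_eq_zero hh)
  have hl1 : p.length ≠ 1 := by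
    intro hh
    exact hab (Walk.adj_of_mem_edges p (edge_of_length_one p hh))
  have hl2 : p.length ≠ 2 := by
    intro hh
    obtain ⟨m, h1, h2, hm⟩ := mid_of_length_two p hh
    exact havoid m hm ⟨h1, h2.symm⟩
  have hl3 : 3 ≤ ℓ := by omega
  cases p with
  | nil => exact absurd rfl hne
  | cons h q =>
    rename_i a'
    have hqsub : q.support ⊆ (Walk.cons h q).support := by
      rw [Walk.support_cons]
      exact fun x hx => List.mem_cons_of_mem _ hx
    have ha'K : a' ∉ K := havoid a' (hqsub (Walk.start_mem_support q))
    have ha'b : a' ≠ b := fun hh => hab (hh ▸ h)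
    have hna'b : ¬ G.Adj a' b := by
      intro hadj
      have hwalk : ∀ v ∈ (Walk.cons h (Walk.cons hadj Walk.nil) : G.Walk a b).support,
          v ∉ K := by
        intro v hv
        simp only [Walk.support_cons, Walk.support_nil, List.mem_cons,
          List.not_mem_nil, or_false] at hv
        rcases hv with rfl | rfl | rfl
        · exact haK
        · exact ha'K
        · exact hbK
      have := hmin _ hwalk
      simp [Walk.length_cons] at this
      omega
    have hKadj : ∀ z ∈ K, G.Adj z a' := by
      intro z hz
      have hzsupp : z ∉ (Walk.cons h q).support := fun hh => havoid z hh hz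
      by_cases hzc : z = c
      · subst hzc
        have hdsupp : d ∉ (Walk.cons h q).support := fun hh => havoid d hh ⟨hda, hdb⟩
        exact (adj_second G hW h q hpath hind hcdadj hz.1.symm hz.2.symm hda.symm hdb.symm
          hzsupp hdsupp).1
      · have hcsupp : c ∉ (Walk.cons h q).support := fun hh => havoid c hh ⟨hca, hcb⟩
        have hzc' : G.Adj z c := hclique hz ⟨hca, hcb⟩ hzc
        exact (adj_second G hW h q hpath hind hzc' hz.1.symm hz.2.symm hca.symm hcb.symm
          hzsupp hcsupp).1
    set K1 : Set V := commonNbhd G a' b with hK1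
    have hKsub : K ⊆ K1 := fun z hz => ⟨(hKadj z hz).symm, hz.2⟩
    have hc1 : c ∈ K1 := hKsub ⟨hca, hcb⟩
    have hd1 : d ∈ K1 := hKsub ⟨hda, hdb⟩
    have hnewpair : ∃ c' d' : V, (G.Adj a' c' ∧ G.Adj b c') ∧ (G.Adj a' d' ∧ G.Adj b d') ∧
        G.Adj c' d' := ⟨c, d, hc1, hd1, hcdadj⟩
    -- measure decreases
    have hNcard : (K : Set V).ncard ≤ Fintype.card V := by
      have := Set.ncard_le_ncard (Set.subset_univ K) (Set.finite_univ)
      rwa [Set.ncard_univ, Nat.card_eq_fintype_card] at this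
    have hN1card : (K1 : Set V).ncard ≤ Fintype.card V := by
      have := Set.ncard_le_ncard (Set.subset_univ K1) (Set.finite_univ)
      rwa [Set.ncard_univ, Nat.card_eq_fintype_card] at this
    have hlt : measureAB G a' b < measureAB G a b := by
      by_cases hKeq : K1 = K
      · -- same common nbhd: distance decreases
        have hq1 : ddist G a' b ≤ q.length := by
          apply Nat.sInf_le
          refine ⟨q, rfl, ?_⟩
          rw [← hK1, hKeq]
          exact fun v hv => havoid v (hqsub hv)
        have hq2 : q.length + 1 = ℓ := by
          rw [← hplen, Walk.length_cons]
        rw [measureAB, measureAB, ← hK, ← hK1, hKeq, ← hℓ]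
        omega
      · have hss : K ⊂ K1 := Ne.ssubset_of_subset (Ne.symm hKeq) hKsub
        have hcardlt : K.ncard < K1.ncard := Set.ncard_lt_ncard hss (Set.toFinite K1)
        have hdle := ddist_le_card G a' b
        rw [measureAB, measureAB, ← hK, ← hK1, ← hℓ]
        set N := Fintype.card V
        have harith : (N + 1) * (N - K1.ncard) + ddist G a' b <
            (N + 1) * (N - K.ncard) + ℓ := by
          have h1 : N - K1.ncard + 1 ≤ N - K.ncard := by omega
          calc (N + 1) * (N - K1.ncard) + ddist G a' b
              ≤ (N + 1) * (N - K1.ncard) + N := by omega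
            _ < (N + 1) * (N - K1.ncard) + (N + 1) := by omega
            _ = (N + 1) * (N - K1.ncard + 1) := by ring
            _ ≤ (N + 1) * (N - K.ncard) := Nat.mul_le_mul_left _ h1
            _ ≤ (N + 1) * (N - K.ncard) + ℓ := by omega
        exact harith
    exact IH (measureAB G a' b) (lt_of_lt_of_le hlt hμ) a' b hna'b ha'b hnewpair le_rfl

/-- If G is a wheel-free graph that contains a diamond as an induced subgraph,
then G has a clique cutset. -/
theorem stmt2 {V : Type u} [Fintype V] (G : SimpleGraph V)
    (hWheel : ¬ ContainsWheel G) (hDiamond : ContainsDiamond G) :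
    HasCliqueCutset G := by
  obtain ⟨a, b, c, d, hne, _, _, _, _, _, hab, hac, had, hbc, hbd, hcd⟩ := hDiamond
  exact main_rec G hWheel (measureAB G a b) a b hab hne
    ⟨c, d, ⟨hac, hbc⟩, ⟨had, hbd⟩, hcd⟩ le_rfl
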